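/- Let m1 ≤ m2 and m1' ≤ m2' be integers ≥ 2 such that gcd(m1,m2) = gcd(m1',m2') and 1/m1 + 1/m2 = 1/m1' + 1/m2' (as rational numbers). Then m1 = m1' and m2 = m2'. -/

import Mathlib

theorem stmt_1 (m1 m2 m1' m2' : ℤ) (hm1 : 2 ≤ m1) (hm1' : 2 ≤ m1')
    (h12 : m1 ≤ m2) (h12' : m1' ≤ m2')
    (hgcd : Int.gcd m1 m2 = Int.gcd m1' m2')
    (hsum : (1 : ℚ) / (m1 : ℚ) + 1 / (m2 : ℚ) = 1 / (m1' : ℚ) + 1 / (m2' : ℚ)) :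
    m1 = m1' ∧ m2 = m2' := by
  have hm2 : 2 ≤ m2 := le_trans hm1 h12
  have hm2' : 2 ≤ m2' := le_trans hm1' h12'
  have h1 : (m1 : ℚ) ≠ 0 := by exact_mod_cast (by omega : m1 ≠ 0)
  have h2 : (m2 : ℚ) ≠ 0 := by exact_mod_cast (by omega : m2 ≠ 0)
  have h1' : (m1' : ℚ) ≠ 0 := by exact_mod_cast (by omega : m1' ≠ 0)
  have h2' : (m2' : ℚ) ≠ 0 := by exact_mod_cast (by omega : m2' ≠ 0)
  have keyQ : (m1' : ℚ) * (m2') * ((m1) + (m2)) = (m1) * (m2) * ((m1') + (m2')) := by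
    field_simp at hsum
    linarith
  have key : m1' * m2' * (m1 + m2) = m1 * m2 * (m1' + m2') := by exact_mod_cast keyQ
  -- gcd decomposition
  set D : ℕ := Int.gcd m1 m2 with hD
  have hDpos : 0 < D := Int.gcd_pos_of_ne_zero_left _ (by omega : m1 ≠ 0)
  have hd0 : (D : ℤ) ≠ 0 := by exact_mod_cast hDpos.ne'
  set a : ℤ := m1 / D with ha
  set b : ℤ := m2 / D with hb
  set a' : ℤ := m1' / D with ha'
  set b' : ℤ := m2' / D with hb'
  have e1 : m1 = D * a := (Int.mul_ediv_cancel' (Int.gcd_dvd_left _ _)).symm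
  have e2 : m2 = D * b := (Int.mul_ediv_cancel' (Int.gcd_dvd_right _ _)).symm
  have hdl' : (D : ℤ) ∣ m1' := by rw [hgcd]; exact Int.gcd_dvd_left _ _
  have hdr' : (D : ℤ) ∣ m2' := by rw [hgcd]; exact Int.gcd_dvd_right _ _
  have e1' : m1' = D * a' := (Int.mul_ediv_cancel' hdl').symm
  have e2' : m2' = D * b' := (Int.mul_ediv_cancel' hdr').symm
  have hab : Int.gcd a b = 1 := Int.gcd_div_gcd_div_gcd hDpos
  have hab' : Int.gcd a' b' = 1 := by
    rw [ha', hb', hgcd]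
    exact Int.gcd_div_gcd_div_gcd (hgcd ▸ hDpos)
  -- positivity
  have hapos : 0 < a := by nlinarith [e1, hDpos, (by exact_mod_cast hDpos : (0:ℤ) < D)]
  have hbpos : 0 < b := by nlinarith [e2, (by exact_mod_cast hDpos : (0:ℤ) < D)]
  have hapos' : 0 < a' := by nlinarith [e1', (by exact_mod_cast hDpos : (0:ℤ) < D)]
  have hbpos' : 0 < b' := by nlinarith [e2', (by exact_mod_cast hDpos : (0:ℤ) < D)]
  -- reduced equation
  have keyr : a' * b' * (a + b) = a * b * (a' + b') := by
    have : (D:ℤ)^3 * (a' * b' * (a + b)) = (D:ℤ)^3 * (a * b * (a' + b')) := by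
      rw [e1, e2, e1', e2'] at key; ring_nf at key ⊢; linarith
    exact mul_left_cancel₀ (pow_ne_zero 3 hd0) this
  have hcop : IsCoprime a b := Int.isCoprime_iff_gcd_eq_one.mpr hab
  have hcop' : IsCoprime a' b' := Int.isCoprime_iff_gcd_eq_one.mpr hab'
  have hc1 : IsCoprime (a * b) (a + b) := by
    have h1 : IsCoprime a (a + b) := by
      have := hcop.add_mul_left_right 1
      simpa [add_comm] using this
    have h2 : IsCoprime b (a + b) := by
      have := hcop.symm.add_mul_left_right 1
      simpa [add_comm] using this
    exact h1.mul_left h2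
  have hc1' : IsCoprime (a' * b') (a' + b') := by
    have h1 : IsCoprime a' (a' + b') := by
      have := hcop'.add_mul_left_right 1
      simpa [add_comm] using this
    have h2 : IsCoprime b' (a' + b') := by
      have := hcop'.symm.add_mul_left_right 1
      simpa [add_comm] using this
    exact h1.mul_left h2
  have hd1 : a * b ∣ a' * b' := by
    apply hc1.dvd_of_dvd_mul_right
    exact ⟨a' + b', by linarith [keyr]⟩
  have hd2 : a' * b' ∣ a * b := by
    apply hc1'.dvd_of_dvd_mul_right
    exact ⟨a + b, by linarith [keyr]⟩
  have habeq : a * b = a' * b' :=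
    Int.dvd_antisymm (by positivity) (by positivity) hd1 hd2
  have hsumeq : a + b = a' + b' := by
    have hne : a * b ≠ 0 := by positivity
    have : a * b * (a + b) = a * b * (a' + b') := by rw [habeq] at keyr ⊢; linarith
    exact mul_left_cancel₀ hne this
  -- back to m's
  have hs : m1 + m2 = m1' + m2' := by
    rw [e1, e2, e1', e2', ← mul_add, ← mul_add, hsumeq]
  have hp : m1 * m2 = m1' * m2' := by
    rw [e1, e2, e1', e2']; linear_combination (D:ℤ) * (D:ℤ) * habeq
  have hq : (m1 - m1') * (m1 - m2') = 0 := by linear_combination m1 * hs - hp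
  rcases mul_eq_zero.mp hq with h | h
  · constructor <;> omega
  · -- m1 = m2', then m2 = m1', forcing all equal
    constructor <;> omega
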